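/- Let I ⊆ R = K[x_1,...,x_n] be a squarefree monomial ideal and Δ the simplicial complex with I = I_Δ. Then I_Δ has linear quotients (with respect to some order of its minimal generators) if and only if the Alexander dual complex Δ* is shellable in the nonpure sense of Björner–Wachs. -/

import Mathlib

/-! Statement 18: a Stanley–Reisner ideal `I_Δ` has linear quotients (for some
order of its minimal generators) if and only if the Alexander dual `Δ*` is
shellable in the nonpure sense of Björner–Wachs.  Minimal generators of `I_Δ`
correspond to minimal nonfaces of `Δ`; for squarefree monomials the linear
quotients condition reads: for all `i < j` there are `l < j` and a vertex `k`
with `σ_l \ σ_j = {k}` and `k ∈ σ_i \ σ_j`. -/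

theorem stmt18 {n : ℕ} (Δ : Finset (Fin n) → Prop)
    -- `Δ` is a simplicial complex
    (hdown : ∀ σ τ : Finset (Fin n), σ ⊆ τ → Δ τ → Δ σ)
    -- the Alexander dual `Δ* = {σ : [n] \ σ ∉ Δ}`
    (Δstar : Finset (Fin n) → Prop)
    (hstar : ∀ σ, Δstar σ ↔ ¬Δ (Finset.univ \ σ))
    -- minimal nonfaces of `Δ`, i.e. supports of the minimal generators of `I_Δ`
    (NF : Set (Finset (Fin n))) (hNF : NF = {σ | ¬Δ σ ∧ ∀ τ ⊂ σ, Δ τ})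
    -- facets of `Δ*`
    (FC : Set (Finset (Fin n)))
    (hFC : FC = {F | Δstar F ∧ ∀ G, Δstar G → F ⊆ G → F = G}) :
    -- `I_Δ` has linear quotients for some order of the minimal generators …
    (∃ l : List (Finset (Fin n)), l.Nodup ∧ (∀ σ, σ ∈ l ↔ σ ∈ NF) ∧
      ∀ j i : Fin l.length, i < j →
        ∃ l0 : Fin l.length, l0 < j ∧ ∃ k : Fin n,
          l.get l0 \ l.get j = {k} ∧ k ∈ l.get i \ l.get j) ↔
    -- … iff the facets of `Δ*` admit a (nonpure) shelling: for each `j`, the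
    -- complex `(∪_{i<j} ⟨F_i⟩) ∩ ⟨F_j⟩` is pure of dimension `dim F_j - 1`
    (∃ l : List (Finset (Fin n)), l.Nodup ∧ (∀ F, F ∈ l ↔ F ∈ FC) ∧
      ∀ j : Fin l.length, ∀ σ : Finset (Fin n), σ ⊆ l.get j →
        (∃ i, i < j ∧ σ ⊆ l.get i) →
        ∃ τ : Finset (Fin n), σ ⊆ τ ∧ τ ⊆ l.get j ∧
          τ.card + 1 = (l.get j).card ∧ ∃ i, i < j ∧ τ ⊆ l.get i) := by
  set f : Finset (Fin n) → Finset (Fin n) := fun s => Finset.univ \ s with hf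
  have hinv : ∀ s, f (f s) = s := by intro s; simp [hf]
  have hfin : Function.Injective f := by
    intro a b h
    have := congrArg f h
    rwa [hinv, hinv] at this
  have key : ∀ F, F ∈ FC ↔ f F ∈ NF := by
    intro F
    rw [hFC, hNF]
    simp only [Set.mem_setOf_eq, hstar]
    constructor
    · rintro ⟨h1, h2⟩
      refine ⟨h1, ?_⟩
      intro τ hτ
      by_contra hΔ
      have hsub : F ⊆ f τ := by
        intro x hx
        simp only [hf, Finset.mem_sdiff, Finset.mem_univ, true_and]
        intro hxτ
        have := hτ.1 hxτ
        simp [hf, hx] at this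
      have := h2 (f τ) (by show ¬Δ (f (f τ)); rw [hinv]; exact hΔ) hsub
      have : f F = τ := by rw [this, hinv]
      exact hτ.2 this.le
    · rintro ⟨h1, h2⟩
      refine ⟨h1, ?_⟩
      intro G hG hFG
      have hsub : f G ⊆ f F := fun x hx => by
        simp only [hf, Finset.mem_sdiff, Finset.mem_univ, true_and] at hx ⊢
        exact fun hxF => hx (hFG hxF)
      rcases eq_or_lt_of_le (Finset.le_iff_subset.mpr hsub) with he | hl
      · exact hfin he.symm
      · exact absurd (h2 _ hl) hG
  constructor
  · rintro ⟨l, hnd, hmem, hlq⟩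
    refine ⟨l.map f, hnd.map_on (fun a _ b _ h => hfin h), ?_, ?_⟩
    · intro F
      rw [List.mem_map, key]
      constructor
      · rintro ⟨σ, hσ, rfl⟩; rw [hinv]; exact (hmem σ).mp hσ
      · intro h; exact ⟨f F, (hmem _).mpr h, hinv F⟩
    · intro j σ hσj ⟨i, hij, hσi⟩
      have hlen : (l.map f).length = l.length := List.length_map f
      have hget : ∀ (x : Fin (l.map f).length),
          (l.map f).get x = f (l.get ⟨x, by simpa using x.2⟩) := by
        intro x; simp [List.get_eq_getElem]
      set j' : Fin l.length := ⟨j, by simpa using j.2⟩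
      set i' : Fin l.length := ⟨i, by simpa using i.2⟩
      obtain ⟨l0, hl0, k, hk1, hk2⟩ := hlq j' i' hij
      have hkFj : k ∈ (l.map f).get j := by
        rw [hget]
        simp only [hf, Finset.mem_sdiff, Finset.mem_univ, true_and]
        exact (Finset.mem_sdiff.mp hk2).2
      refine ⟨((l.map f).get j).erase k, ?_, Finset.erase_subset _ _,
        Finset.card_erase_add_one hkFj, l0.cast hlen.symm, hl0, ?_⟩
      · intro x hx
        refine Finset.mem_erase.mpr ⟨?_, hσj hx⟩
        rintro rfl
        have := hσi hx
        rw [hget] at this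
        simp only [hf, Finset.mem_sdiff] at this
        exact this.2 (Finset.mem_sdiff.mp hk2).1
      · intro x hx
        rw [hget]
        have hx' := Finset.mem_erase.mp hx
        have hxj := hx'.2
        rw [hget] at hxj
        simp only [hf, Finset.mem_sdiff, Finset.mem_univ, true_and] at hxj ⊢
        intro hxl0
        have : x ∈ l.get l0 \ l.get j' := Finset.mem_sdiff.mpr ⟨hxl0, hxj⟩
        rw [hk1] at this
        exact hx'.1 (Finset.mem_singleton.mp this)
  · rintro ⟨l, hnd, hmem, hsh⟩
    refine ⟨l.map f, hnd.map_on (fun a _ b _ h => hfin h), ?_, ?_⟩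
    · intro σ
      rw [List.mem_map]
      constructor
      · rintro ⟨F, hF, rfl⟩; exact (key F).mp ((hmem F).mp hF)
      · intro h
        refine ⟨f σ, (hmem _).mpr ((key _).mpr ?_), hinv σ⟩
        rwa [hinv]
    · intro j i hij
      have hlen : (l.map f).length = l.length := List.length_map f
      have hget : ∀ (x : Fin (l.map f).length),
          (l.map f).get x = f (l.get ⟨x, by simpa using x.2⟩) := by
        intro x; simp [List.get_eq_getElem]
      set j' : Fin l.length := ⟨j, by simpa using j.2⟩
      set i' : Fin l.length := ⟨i, by simpa using i.2⟩
      set Fj := l.get j' with hFj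
      set Fi := l.get i' with hFi
      obtain ⟨τ, hστ, hτj, hcard, i0, hi0, hτi0⟩ :=
        hsh j' (Fi ∩ Fj) Finset.inter_subset_right ⟨i', hij, Finset.inter_subset_left⟩
      set F0 := l.get i0 with hF0
      -- f F0 is a minimal nonface, f Fj is a nonface
      have hmin : ∀ x : Fin l.length, ¬Δ (f (l.get x)) ∧ ∀ τ ⊂ f (l.get x), Δ τ := by
        intro x
        have hx : l.get x ∈ l := List.get_mem l x
        have := (key _).mp ((hmem _).mp hx)
        rwa [hNF, Set.mem_setOf_eq] at this
      -- F_j \ τ = {k}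
      have hc1 : (Fj \ τ).card = 1 := by
        rw [Finset.card_sdiff_of_subset hτj]; omega
      obtain ⟨k, hk⟩ := Finset.card_eq_one.mp hc1
      have hkj : k ∈ Fj ∧ k ∉ τ := by
        have : k ∈ Fj \ τ := hk ▸ Finset.mem_singleton_self k
        exact Finset.mem_sdiff.mp this
      -- f F0 ≠ f Fj since i0 ≠ j'
      have hne : f F0 ≠ f Fj := by
        intro h
        have : F0 = Fj := hfin h
        have := (hnd.get_inj_iff).mp this
        omega
      -- f F0 \ f Fj nonempty
      have hnonsub : ¬ f F0 ⊆ f Fj := by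
        intro hsub
        have hlt : f F0 ⊂ f Fj := lt_of_le_of_ne (Finset.le_iff_subset.mpr hsub) hne
        exact (hmin i0).1 ((hmin j').2 _ hlt)
      obtain ⟨x, hx1, hx2⟩ := Finset.not_subset.mp hnonsub
      -- x ∈ Fj \ F0, and Fj \ F0 ⊆ Fj \ τ = {k}
      have hsd : ∀ y, y ∈ f F0 \ f Fj ↔ y ∈ Fj \ F0 := by
        intro y
        simp only [hf, Finset.mem_sdiff, Finset.mem_univ, true_and, not_not]
        tauto
      have hxk : x ∈ Fj \ F0 := (hsd x).mp (Finset.mem_sdiff.mpr ⟨hx1, hx2⟩)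
      have hsub2 : Fj \ F0 ⊆ ({k} : Finset (Fin n)) := by
        rw [← hk]
        exact Finset.sdiff_subset_sdiff le_rfl (Finset.le_iff_subset.mpr hτi0)
      have hxkk : x = k := Finset.mem_singleton.mp (hsub2 hxk)
      subst hxkk
      have hxk' := Finset.mem_sdiff.mp hxk
      refine ⟨i0.cast hlen.symm, hi0, x, ?_, ?_⟩
      · rw [hget, hget]
        have e1 : (⟨(i0.cast hlen.symm : Fin (l.map f).length), by simpa using (i0.cast hlen.symm).2⟩ : Fin l.length) = i0 := by
          ext; simp
        have e2 : (⟨(j : ℕ), by simpa using j.2⟩ : Fin l.length) = j' := rfl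
        rw [e1, e2]
        apply Finset.Subset.antisymm
        · intro y hy
          exact hsub2 ((hsd y).mp hy)
        · intro y hy
          rw [Finset.mem_singleton] at hy
          subst hy
          exact (hsd y).mpr hxk
      · rw [hget, hget]
        have e2 : (⟨(j : ℕ), by simpa using j.2⟩ : Fin l.length) = j' := rfl
        have e3 : (⟨(i : ℕ), by simpa using i.2⟩ : Fin l.length) = i' := rfl
        rw [e2, e3]
        simp only [hf, Finset.mem_sdiff, Finset.mem_univ, true_and, not_not]
        constructor
        · -- x ∉ Fi : since x ∈ Fj, if x ∈ Fi then x ∈ Fi ∩ Fj ⊆ τ, but x ∉ τ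
          intro hxFi
          exact hkj.2 (hστ (Finset.mem_inter.mpr ⟨hxFi, hxk'.1⟩))
        · exact hxk'.1
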